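/- In the *-algebra A(SU_q(2)) with 0 < q < 1, for all natural numbers j ≥ k one has α^j (α*)^k = α^{j-k} · ∏_{p=0}^{k-1} (1 − q^{−2p} β β*). -/

import Mathlib

noncomputable section

namespace QAlg

/-- Generators of a free *-algebra: `inl i` is the generator `z i`, and
`inr i` is its formal adjoint `(z i)*`. -/
abbrev Gen (X : Type) := X ⊕ X

/-- The free algebra on the doubled generating set, realized as the monoid
algebra of the free monoid. -/
abbrev F (X : Type) := MonoidAlgebra ℂ (FreeMonoid (Gen X))

/-- The *-operation on words: reverse the word and exchange the two copies
of the generators. -/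
def wordStar {X : Type} (w : FreeMonoid (Gen X)) : FreeMonoid (Gen X) :=
  FreeMonoid.ofList (((FreeMonoid.toList w).map Sum.swap).reverse)

lemma wordStar_mul {X : Type} (w v : FreeMonoid (Gen X)) :
    wordStar (w * v) = wordStar v * wordStar w := by
  simp [wordStar, FreeMonoid.toList_mul, FreeMonoid.ofList_append]

lemma wordStar_wordStar {X : Type} (w : FreeMonoid (Gen X)) : wordStar (wordStar w) = w := by
  simp [wordStar, List.map_reverse, List.map_map, Sum.swap_swap_eq]

/-- The canonical conjugate-linear antimultiplicative involution on the free
algebra `F X`, determined by `star (z i) = (z i)*` and complex conjugation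
on scalars. -/
def starF {X : Type} (f : F X) : F X :=
  Finsupp.sum f.coeff fun w c => MonoidAlgebra.single (wordStar w) ((starRingEnd ℂ) c)

lemma starF_single {X : Type} (w : FreeMonoid (Gen X)) (c : ℂ) :
    starF (MonoidAlgebra.single w c) = MonoidAlgebra.single (wordStar w) ((starRingEnd ℂ) c) := by
  classical
  unfold starF
  rw [MonoidAlgebra.coeff_single]
  refine Finsupp.sum_single_index ?_
  simp

lemma starF_zero {X : Type} : starF (0 : F X) = 0 := Finsupp.sum_zero_index

lemma starF_add {X : Type} (f g : F X) : starF (f + g) = starF f + starF g := by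
  classical
  unfold starF
  rw [MonoidAlgebra.coeff_add]
  refine Finsupp.sum_add_index' (fun w => by simp) (fun w c₁ c₂ => by
    simp [map_add, MonoidAlgebra.single_add])

lemma starF_single_mul {X : Type} (w : FreeMonoid (Gen X)) (c : ℂ) (g : F X) :
    starF (MonoidAlgebra.single w c * g) = starF g * starF (MonoidAlgebra.single w c) := by
  classical
  induction g using MonoidAlgebra.induction with
  | zero => simp [starF_zero]
  | single_add v d g _ _ ihg =>
    rw [mul_add, starF_add, starF_add, add_mul, ihg]
    congr 1
    rw [MonoidAlgebra.single_mul_single, starF_single, starF_single, starF_single,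
      MonoidAlgebra.single_mul_single, wordStar_mul, map_mul, mul_comm]

lemma starF_mul {X : Type} (f g : F X) : starF (f * g) = starF g * starF f := by
  classical
  induction f using MonoidAlgebra.induction with
  | zero => simp [starF_zero]
  | single_add w c f _ _ ih =>
    rw [add_mul, starF_add, starF_add, ih, mul_add, starF_single_mul]

lemma starF_starF {X : Type} (f : F X) : starF (starF f) = f := by
  classical
  induction f using MonoidAlgebra.induction with
  | zero => simp [starF_zero]
  | single_add w c f _ _ ih =>
    rw [starF_add, starF_add, ih, starF_single, starF_single, wordStar_wordStar,
      Complex.conj_conj]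

/-- The free *-algebra structure on `F X`. -/
def starRingF (X : Type) : StarRing (F X) where
  star := starF
  star_involutive := starF_starF
  star_mul := starF_mul
  star_add := starF_add

/-- The generator `z i` inside the free *-algebra. -/
def zF {X : Type} (i : X) : F X := MonoidAlgebra.of ℂ _ (FreeMonoid.of (Sum.inl i))

/-- The formal adjoint `(z i)*` inside the free *-algebra. -/
def zsF {X : Type} (i : X) : F X := MonoidAlgebra.of ℂ _ (FreeMonoid.of (Sum.inr i))

/-- The defining relations of quantum `SU(2)` (with `zF 0 = α`, `zF 1 = β`,
`zsF i` playing the role of the adjoint generators), together with their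
images under the *-operation. -/
inductive surel (q : ℝ) : F (Fin 2) → F (Fin 2) → Prop
  | r1 : surel q (zF 1 * zF 0) ((q : ℂ) • (zF 0 * zF 1))
  | r2 : surel q (zsF 1 * zF 0) ((q : ℂ) • (zF 0 * zsF 1))
  | r3 : surel q (zF 1 * zsF 1) (zsF 1 * zF 1)
  | r4 : surel q (zF 0 * zsF 0 + zF 1 * zsF 1) 1
  | r5 : surel q (zsF 0 * zF 0 + ((q ^ 2 : ℝ) : ℂ) • (zF 1 * zsF 1)) 1
  | star_rel {a b} : surel q a b → surel q (starF a) (starF b)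

/-- The coordinate *-algebra `A(SU_q(2))`. -/
abbrev SU (q : ℝ) := RingQuot (surel q)

noncomputable instance (q : ℝ) : StarRing (SU q) :=
  @RingQuot.starRing _ _ (starRingF _) (surel q) (fun _ _ h => surel.star_rel h)

/-- The generator `α` of `A(SU_q(2))`. -/
def αg (q : ℝ) : SU q := RingQuot.mkAlgHom ℂ (surel q) (zF 0)

/-- The generator `β` of `A(SU_q(2))`. -/
def βg (q : ℝ) : SU q := RingQuot.mkAlgHom ℂ (surel q) (zF 1)

lemma star_mk (q : ℝ) (x : F (Fin 2)) :
    star (RingQuot.mkAlgHom ℂ (surel q) x) = RingQuot.mkAlgHom ℂ (surel q) (starF x) := by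
  letI : StarRing (F (Fin 2)) := starRingF _
  have h : ∀ y : F (Fin 2), RingQuot.mkAlgHom ℂ (surel q) y = ⟨Quot.mk _ y⟩ := fun y => by
    simp only [RingQuot.mkAlgHom_def, RingQuot.mkRingHom_def]; rfl
  rw [h, h]
  rfl

lemma starF_z {X : Type} (i : X) : starF (zF i) = zsF i := by
  simp [zF, zsF, MonoidAlgebra.of_apply, starF_single, wordStar]

lemma starF_zs {X : Type} (i : X) : starF (zsF i) = zF i := by
  simp [zF, zsF, MonoidAlgebra.of_apply, starF_single, wordStar]

lemma starF_smul {X : Type} (c : ℂ) (f : F X) :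
    starF (c • f) = (starRingEnd ℂ) c • starF f := by
  classical
  induction f using MonoidAlgebra.induction with
  | zero => simp [starF_zero]
  | single_add w d f _ _ ih =>
    rw [smul_add, starF_add, starF_add, ih, smul_add]
    congr 1
    rw [MonoidAlgebra.smul_single' c w d, starF_single, starF_single, map_mul,
      MonoidAlgebra.smul_single']

lemma star_αg (q : ℝ) : star (αg q) = RingQuot.mkAlgHom ℂ (surel q) (zsF 0) := by
  rw [αg, star_mk, starF_z]

lemma star_βg (q : ℝ) : star (βg q) = RingQuot.mkAlgHom ℂ (surel q) (zsF 1) := by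
  rw [βg, star_mk, starF_z]

lemma rel1 (q : ℝ) : βg q * αg q = (q : ℂ) • (αg q * βg q) := by
  have := RingQuot.mkAlgHom_rel ℂ (surel.r1 (q := q))
  rw [map_mul, map_smul, map_mul] at this
  exact this

lemma rel2 (q : ℝ) : star (βg q) * αg q = (q : ℂ) • (αg q * star (βg q)) := by
  have := RingQuot.mkAlgHom_rel ℂ (surel.r2 (q := q))
  rw [map_mul, map_smul, map_mul] at this
  rw [star_βg]
  exact this

lemma rel4 (q : ℝ) : αg q * star (αg q) + βg q * star (βg q) = 1 := by
  have := RingQuot.mkAlgHom_rel ℂ (surel.r4 (q := q))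
  rw [map_add, map_mul, map_mul, map_one] at this
  rw [star_αg, star_βg]
  exact this

lemma rel1s (q : ℝ) :
    star (αg q) * star (βg q) = (q : ℂ) • (star (βg q) * star (αg q)) := by
  have := RingQuot.mkAlgHom_rel ℂ (surel.star_rel (surel.r1 (q := q)))
  rw [starF_mul, starF_smul, starF_mul, starF_z, starF_z] at this
  rw [map_mul, map_smul, map_mul] at this
  rw [star_αg, star_βg]
  simpa [Complex.conj_ofReal] using this

lemma rel2s (q : ℝ) :
    star (αg q) * βg q = (q : ℂ) • (βg q * star (αg q)) := by
  have := RingQuot.mkAlgHom_rel ℂ (surel.star_rel (surel.r2 (q := q)))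
  rw [starF_mul, starF_smul, starF_mul, starF_z, starF_zs] at this
  rw [map_mul, map_smul, map_mul] at this
  rw [star_αg, βg]
  simpa [Complex.conj_ofReal] using this

lemma alphaStar_mul_BB (q : ℝ) :
    star (αg q) * (βg q * star (βg q)) =
      ((q : ℂ) ^ 2) • (βg q * star (βg q) * star (αg q)) := by
  calc star (αg q) * (βg q * star (βg q))
      = (star (αg q) * βg q) * star (βg q) := by rw [mul_assoc]
    _ = (q : ℂ) • (βg q * (star (αg q) * star (βg q))) := by
        rw [rel2s, smul_mul_assoc, mul_assoc]
    _ = (q : ℂ) • (βg q * ((q : ℂ) • (star (βg q) * star (αg q)))) := by rw [rel1s]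
    _ = ((q : ℂ) ^ 2) • (βg q * star (βg q) * star (αg q)) := by
        rw [mul_smul_comm, smul_smul, ← mul_assoc, ← sq]

lemma BB_mul_alphaStar (q : ℝ) (hq : (q : ℂ) ≠ 0) :
    βg q * star (βg q) * star (αg q) =
      ((q : ℂ) ^ (-2 : ℤ)) • (star (αg q) * (βg q * star (βg q))) := by
  rw [alphaStar_mul_BB, smul_smul]
  rw [show ((q : ℂ) ^ (2 : ℕ)) = (q : ℂ) ^ (2 : ℤ) from (zpow_natCast _ 2).symm,
    ← zpow_add₀ hq]
  norm_num

lemma comm_factor (q : ℝ) (hq : (q : ℂ) ≠ 0) (c : ℂ) :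
    (1 - c • (βg q * star (βg q))) * star (αg q) =
      star (αg q) * (1 - ((q : ℂ) ^ (-2 : ℤ) * c) • (βg q * star (βg q))) := by
  rw [sub_mul, one_mul, mul_sub, mul_one, smul_mul_assoc, BB_mul_alphaStar q hq,
    mul_smul_comm, smul_smul, mul_comm c]

/-- In `A(SU_q(2))` with `0 < q < 1`, for `j ≥ k` one has
`α^j (α*)^k = α^(j-k) ∏_{p=0}^{k-1} (1 - q^(-2p) β β*)`. -/
theorem alpha_pow_mul_alphaStar_pow_of_le (q : ℝ) (hq0 : 0 < q) (hq1 : q < 1)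
    (j k : ℕ) (h : k ≤ j) :
    αg q ^ j * star (αg q) ^ k =
      αg q ^ (j - k) *
        ((List.range k).map fun p =>
          1 - ((q : ℂ) ^ (-(2 * (p : ℤ)))) • (βg q * star (βg q))).prod := by
  have hq : (q : ℂ) ≠ 0 := Complex.ofReal_ne_zero.mpr hq0.ne'
  simp only [bind_pure_comp, List.map_eq_map, List.map_map]
  show αg q ^ j * star (αg q) ^ k =
      αg q ^ (j - k) *
        ((List.range k).map (fun p : ℕ =>
          1 - ((q : ℂ) ^ (-(2 * (p : ℤ)))) • (βg q * star (βg q)))).prod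
  set A := αg q with hA
  set As := star (αg q) with hAs
  set B := βg q * star (βg q) with hB
  set f : ℕ → SU q := fun p => 1 - ((q : ℂ) ^ (-(2 * (p : ℤ)))) • B with hf
  have hAAs : A * As = 1 - B := eq_sub_of_add_eq (rel4 q)
  have step : ∀ p : ℕ, f p * As = As * f (p + 1) := by
    intro p
    rw [hf]
    rw [comm_factor q hq]
    congr 2
    rw [← zpow_add₀ hq]
    congr 1
    push_cast
    ring
  have commP : ∀ n : ℕ,
      ((List.range n).map f).prod * As =
        As * ((List.range n).map (fun p => f (p + 1))).prod := by
    intro n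
    induction n with
    | zero => simp
    | succ n ih =>
      rw [List.range_succ, List.map_append, List.map_append, List.prod_append,
        List.prod_append, List.map_singleton, List.map_singleton,
        List.prod_singleton, List.prod_singleton, mul_assoc, step n, ← mul_assoc,
        ih, mul_assoc]
  have cons : ∀ n : ℕ,
      ((List.range (n + 1)).map f).prod =
        f 0 * ((List.range n).map (fun p => f (p + 1))).prod := by
    intro n
    rw [List.range_succ_eq_map, List.map_cons, List.map_map, List.prod_cons]
    rfl
  have hf0 : f 0 = 1 - B := by simp [hf]
  revert h
  induction k with
  | zero => intro _; simp
  | succ k ih =>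
    intro h
    have hk := Nat.le_of_succ_le h
    have hjk : j - k = (j - (k + 1)) + 1 := by omega
    calc A ^ j * As ^ (k + 1)
        = (A ^ j * As ^ k) * As := by rw [pow_succ, mul_assoc]
      _ = (A ^ (j - k) * ((List.range k).map f).prod) * As := by rw [ih hk]
      _ = A ^ (j - k) * (As * ((List.range k).map (fun p => f (p + 1))).prod) := by
          rw [mul_assoc, commP k]
      _ = (A ^ (j - (k + 1)) * A) *
            (As * ((List.range k).map (fun p => f (p + 1))).prod) := by
          rw [← pow_succ, ← hjk]
      _ = A ^ (j - (k + 1)) *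
            ((A * As) * ((List.range k).map (fun p => f (p + 1))).prod) := by
          rw [mul_assoc, ← mul_assoc A As]
      _ = A ^ (j - (k + 1)) *
            ((1 - B) * ((List.range k).map (fun p => f (p + 1))).prod) := by
          rw [hAAs]
      _ = A ^ (j - (k + 1)) * ((List.range (k + 1)).map f).prod := by
          rw [cons k, hf0]

end QAlg
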